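/- Let f : X → Y be a continuous surjection between digital images. Then f is shy if and only if the multivalued inverse f⁻¹ : Y ⊸ X, given by f⁻¹(y) = {x ∈ X : f(x) = y}, is connectivity preserving. -/

import Mathlib

/-- A subset `A` is connected under adjacency `adj`: any two of its points are
joined by a path of consecutively adjacent points lying in `A`. -/
def ConnIn {X : Type*} (adj : X → X → Prop) (A : Set X) : Prop :=
  ∀ a ∈ A, ∀ b ∈ A,
    Relation.ReflTransGen (fun u v => adj u v ∧ u ∈ A ∧ v ∈ A) a b

/-- Two subsets are adjacent if they contain points that are equal or adjacent. -/
def AdjSets {X : Type*} (adj : X → X → Prop) (A B : Set X) : Prop :=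
  ∃ a ∈ A, ∃ b ∈ B, a = b ∨ adj a b

/-- Image of a set under a multivalued function. -/
def imageMV {X Y : Type*} (F : X → Set Y) (A : Set X) : Set Y :=
  ⋃ x ∈ A, F x

/-- A multivalued function is connectivity preserving if images of connected
sets are connected. -/
def ConnPres {X Y : Type*} (adjX : X → X → Prop) (adjY : Y → Y → Prop)
    (F : X → Set Y) : Prop :=
  ∀ A : Set X, ConnIn adjX A → ConnIn adjY (imageMV F A)

lemma path_mono' {X : Type*} {adj : X → X → Prop} {S T : Set X} (h : S ⊆ T) {a b : X}
    (hp : Relation.ReflTransGen (fun u v => adj u v ∧ u ∈ S ∧ v ∈ S) a b) :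
    Relation.ReflTransGen (fun u v => adj u v ∧ u ∈ T ∧ v ∈ T) a b :=
  Relation.ReflTransGen.mono (r := fun u v => adj u v ∧ u ∈ S ∧ v ∈ S)
    (fun _ _ ⟨h1, h2, h3⟩ => ⟨h1, h h2, h h3⟩) a b hp

lemma imageMV_preimage {X Y : Type*} (f : X → Y) (A : Set Y) :
    imageMV (fun y => f ⁻¹' {y}) A = f ⁻¹' A := by
  ext x; simp [imageMV, eq_comm]

theorem shy_iff_inverse_connectivity_preserving {X Y : Type*}
    (adjX : X → X → Prop) (adjY : Y → Y → Prop)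
    (hsymX : ∀ a b, adjX a b → adjX b a) (hirrX : ∀ a, ¬ adjX a a)
    (hsymY : ∀ a b, adjY a b → adjY b a) (hirrY : ∀ a, ¬ adjY a a)
    (f : X → Y)
    (hcont : ∀ x x', adjX x x' → f x = f x' ∨ adjY (f x) (f x'))
    (hsurj : Function.Surjective f) :
    ((∀ y : Y, ConnIn adjX (f ⁻¹' {y})) ∧
     (∀ y₀ y₁, adjY y₀ y₁ → ConnIn adjX (f ⁻¹' {y₀, y₁}))) ↔
    ConnPres adjY adjX (fun y => f ⁻¹' {y}) := by
  constructor
  · rintro ⟨h1, h2⟩ A hA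
    rw [imageMV_preimage]
    intro a ha b hb
    have hpath := hA (f a) ha (f b) hb
    suffices H : ∀ y, Relation.ReflTransGen (fun u v => adjY u v ∧ u ∈ A ∧ v ∈ A) (f a) y →
        ∀ b : X, f b = y →
        Relation.ReflTransGen (fun u v => adjX u v ∧ u ∈ f ⁻¹' A ∧ v ∈ f ⁻¹' A) a b by
      exact H (f b) hpath b rfl
    intro y hy
    induction hy with
    | refl =>
      intro b hb
      have hsub : f ⁻¹' {f a} ⊆ f ⁻¹' A := fun x hx => by
        simp only [Set.mem_preimage, Set.mem_singleton_iff] at hx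
        simpa [Set.mem_preimage, hx] using ha
      exact path_mono' hsub (h1 (f a) a rfl b hb)
    | @tail u c hab hbc ih =>
      intro b hb
      obtain ⟨hadj, huA, hcA⟩ := hbc
      obtain ⟨a', ha'⟩ := hsurj u
      have p1 := ih a' ha'
      have hsub : f ⁻¹' {u, c} ⊆ f ⁻¹' A := fun x hx => by
        rcases hx with hx | hx <;> simp_all [Set.mem_preimage]
      have p2 := h2 u c hadj a' (by simp [ha']) b (by simp [hb])
      exact p1.trans (path_mono' hsub p2)
  · intro hcp
    constructor
    · intro y
      have hc : ConnIn adjY ({y} : Set Y) := by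
        intro a ha b hb
        simp only [Set.mem_singleton_iff] at ha hb
        subst ha; subst hb
        exact Relation.ReflTransGen.refl
      have := hcp {y} hc
      rwa [imageMV_preimage] at this
    · intro y₀ y₁ hadj
      have hc : ConnIn adjY ({y₀, y₁} : Set Y) := by
        intro a ha b hb
        rcases ha with rfl | rfl <;> rcases hb with rfl | rfl
        · exact Relation.ReflTransGen.refl
        · exact Relation.ReflTransGen.single ⟨hadj, by simp, by simp⟩
        · exact Relation.ReflTransGen.single ⟨hsymY _ _ hadj, by simp, by simp⟩
        · exact Relation.ReflTransGen.refl
      have := hcp _ hc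
      rwa [imageMV_preimage] at this
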